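/- Let A = [a_1,...,a_r] be an admissible twig and let n ≥ 2 and ℓ ≥ 0 be integers. Let d be the determinant of the 4×4 matrix with rows [2, −1, −1, −1], [−(n·d(A̲) − d(Ā̲)), n·d(A) − d(Ā), 0, 0], [−(d(A) − d(A̲)), 0, d(A), 0], [−ℓ, 0, 0, ℓ+1], and let d' be the determinant of the 3×3 matrix with rows [0, −1, −1], [(n·d(A) − d(Ā)) − (n·d(A̲) − d(Ā̲)) − 1, n·d(A) − d(Ā), 0], [d(A̲) − 1, 0, d(A)]. Then d = d' if and only if ℓ = (n+1)·d(A) − d(Ā). -/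

import Mathlib

open Matrix BigOperators

/-- The intersection-type matrix of a twig `A = [a_1,...,a_r]`: the `r × r` symmetric
tridiagonal matrix with diagonal entries `a_1,...,a_r` and `-1` on the sub/super-diagonals. -/
def twigMatrix (A : List ℤ) : Matrix (Fin A.length) (Fin A.length) ℤ :=
  fun i j =>
    if i = j then A.get i
    else if (i : ℕ) + 1 = (j : ℕ) ∨ (j : ℕ) + 1 = (i : ℕ) then -1
    else 0

/-- The determinant `d(A)` of a twig; in particular `d([]) = 1`. -/
def twigDet (A : List ℤ) : ℤ := (twigMatrix A).det

/-- A twig is admissible if it is nonempty and all its entries are `≥ 2`. -/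
def Admissible (A : List ℤ) : Prop := A ≠ [] ∧ ∀ a ∈ A, 2 ≤ a

/-- `d(Ā̲)`, i.e. `d([a_2,...,a_{r-1}])`, with the convention that it is `0` when `r = 1`. -/
def twigDetMid (A : List ℤ) : ℤ :=
  if A.length ≤ 1 then 0 else twigDet A.tail.dropLast

lemma twigDet_nil : twigDet [] = 1 := by
  show (twigMatrix []).det = 1
  have h : IsEmpty (Fin ([] : List ℤ).length) := ⟨fun i => absurd i.2 (by simp)⟩
  exact Matrix.det_isEmpty

lemma twigDet_single (a : ℤ) : twigDet [a] = a := by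
  simp [twigDet, Matrix.det_fin_one, twigMatrix]

lemma succAbove_one_zero {n : ℕ} : (1 : Fin (n+2)).succAbove 0 = 0 := by
  simp [Fin.succAbove, Fin.lt_def]

lemma succAbove_one_succ {n : ℕ} (j : Fin n) :
    (1 : Fin (n+2)).succAbove j.succ = j.succ.succ := by
  rw [Fin.succAbove, if_neg]
  simp [Fin.lt_def]

lemma det_expand {n : ℕ} (M : Matrix (Fin (n+2)) (Fin (n+2)) ℤ)
    (h0 : ∀ j : Fin n, M 0 j.succ.succ = 0) (hc : ∀ i : Fin n, M i.succ.succ 0 = 0) :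
    M.det = M 0 0 * (M.submatrix Fin.succ Fin.succ).det
      - M 0 1 * (M 1 0 *
        (M.submatrix (fun i : Fin n => i.succ.succ) (fun j : Fin n => j.succ.succ)).det) := by
  rw [Matrix.det_succ_row_zero, Fin.sum_univ_succ, Fin.sum_univ_succ]
  have hrest : ∀ i : Fin n,
      (-1 : ℤ) ^ ((i.succ.succ : Fin (n+2)) : ℕ) * M 0 i.succ.succ *
        ((M.submatrix Fin.succ i.succ.succ.succAbove)).det = 0 := by
    intro i; rw [h0 i]; ring
  rw [Finset.sum_congr rfl (fun i _ => hrest i), Finset.sum_const_zero]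
  have hN : (M.submatrix Fin.succ ((0 : Fin (n+1)).succ.succAbove)).det
      = M 1 0 * (M.submatrix (fun i : Fin n => i.succ.succ) (fun j : Fin n => j.succ.succ)).det := by
    rw [Matrix.det_succ_column_zero, Fin.sum_univ_succ]
    have hz : ∀ i : Fin n,
        (-1 : ℤ) ^ ((i.succ : Fin (n+1)) : ℕ) *
          (M.submatrix Fin.succ ((0 : Fin (n+1)).succ.succAbove)) i.succ 0 *
          ((M.submatrix Fin.succ ((0 : Fin (n+1)).succ.succAbove)).submatrix i.succ.succAbove Fin.succ).det = 0 := by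
      intro i
      have : (M.submatrix Fin.succ ((0 : Fin (n+1)).succ.succAbove)) i.succ 0 = 0 := by
        show M i.succ.succ ((0 : Fin (n+1)).succ.succAbove 0) = 0
        rw [show ((0 : Fin (n+1)).succ : Fin (n+2)) = 1 from rfl, succAbove_one_zero]
        exact hc i
      rw [this]; ring
    rw [Finset.sum_congr rfl (fun i _ => hz i), Finset.sum_const_zero, add_zero]
    have e1 : (M.submatrix Fin.succ ((0 : Fin (n+1)).succ.succAbove)) 0 0 = M 1 0 := by
      show M (0 : Fin (n+1)).succ ((0 : Fin (n+1)).succ.succAbove 0) = M 1 0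
      rw [show ((0 : Fin (n+1)).succ : Fin (n+2)) = 1 from rfl, succAbove_one_zero]
    have e2 : ((M.submatrix Fin.succ ((0 : Fin (n+1)).succ.succAbove)).submatrix
        (0 : Fin (n+1)).succAbove Fin.succ)
        = M.submatrix (fun i : Fin n => i.succ.succ) (fun j : Fin n => j.succ.succ) := by
      ext i j
      show M ((0 : Fin (n+1)).succAbove i).succ ((0 : Fin (n+1)).succ.succAbove j.succ) = _
      rw [Fin.zero_succAbove, show ((0 : Fin (n+1)).succ : Fin (n+2)) = 1 from rfl,
        succAbove_one_succ]
      rfl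
    rw [e1, e2]
    simp
  rw [hN]
  have e0 : M.submatrix Fin.succ ((0 : Fin (n+2)).succAbove) = M.submatrix Fin.succ Fin.succ := by
    ext i j; simp [Fin.zero_succAbove]
  rw [e0]
  simp [Fin.val_succ]
  ring

lemma sub1 (a : ℤ) (B : List ℤ) :
    (twigMatrix (a :: B)).submatrix Fin.succ Fin.succ = twigMatrix B := by
  ext i j
  simp only [Matrix.submatrix_apply, twigMatrix, Fin.succ_inj]
  rcases eq_or_ne i j with h | h
  · simp [h]
  · simp only [h, if_false]
    exact if_congr (by simp only [Fin.val_succ]; omega) rfl rfl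

lemma twigDet_cons (a b : ℤ) (C : List ℤ) :
    twigDet (a :: b :: C) = a * twigDet (b :: C) - twigDet C := by
  have h0 : ∀ j : Fin C.length,
      twigMatrix (a :: b :: C) (0 : Fin (C.length + 2)) j.succ.succ = 0 := by
    intro j
    simp [twigMatrix, Fin.ext_iff]
  have hc : ∀ i : Fin C.length,
      twigMatrix (a :: b :: C) i.succ.succ (0 : Fin (C.length + 2)) = 0 := by
    intro i
    simp [twigMatrix, Fin.ext_iff]
  have h := det_expand (n := C.length) (twigMatrix (a :: b :: C)) h0 hc
  have ea : twigMatrix (a :: b :: C) (0 : Fin (C.length+2)) (0 : Fin (C.length+2)) = a := by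
    simp [twigMatrix]
  have eb : twigMatrix (a :: b :: C) (0 : Fin (C.length+2)) (1 : Fin (C.length+2)) = -1 := by
    simp [twigMatrix, Fin.ext_iff]
  have ec : twigMatrix (a :: b :: C) (1 : Fin (C.length+2)) (0 : Fin (C.length+2)) = -1 := by
    simp [twigMatrix, Fin.ext_iff]
  have es1 : (twigMatrix (a :: b :: C)).submatrix Fin.succ Fin.succ = twigMatrix (b :: C) :=
    sub1 a (b :: C)
  have es2 : (twigMatrix (a :: b :: C)).submatrix
      (fun i : Fin C.length => i.succ.succ) (fun j : Fin C.length => j.succ.succ)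
      = twigMatrix C := by
    have : (twigMatrix (a :: b :: C)).submatrix
        (fun i : Fin C.length => i.succ.succ) (fun j : Fin C.length => j.succ.succ)
        = ((twigMatrix (a :: b :: C)).submatrix Fin.succ Fin.succ).submatrix Fin.succ Fin.succ :=
      rfl
    rw [this, es1, sub1]
  rw [ea, eb, ec, es1, es2] at h
  have h' : twigDet (a :: b :: C) = a * twigDet (b :: C) - -1 * (-1 * twigDet C) := h
  rw [h']; ring

lemma twig_key (A : List ℤ) (hA : A ≠ []) :
    twigDet A * twigDetMid A - twigDet A.tail * twigDet A.dropLast = -1 := by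
  induction A with
  | nil => exact absurd rfl hA
  | cons a B ih =>
    rcases B with _ | ⟨b, B'⟩
    · simp [twigDetMid, twigDet_nil, twigDet_single]
    rcases B' with _ | ⟨c, C⟩
    · have h1 : twigDet [a, b] = a * b - 1 := by
        rw [twigDet_cons, twigDet_single, twigDet_nil]
      simp [twigDetMid, twigDet_nil, twigDet_single, h1]
      ring
    · have ih' := ih (by simp)
      have em1 : twigDetMid (a :: b :: c :: C) = twigDet (b :: (c :: C).dropLast) := by
        simp [twigDetMid]
      have em2 : twigDetMid (b :: c :: C) = twigDet (c :: C).dropLast := by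
        simp [twigDetMid]
      have edl : (a :: b :: c :: C).dropLast = a :: b :: (c :: C).dropLast := rfl
      have edl2 : (b :: c :: C).dropLast = b :: (c :: C).dropLast := rfl
      rw [em2, List.tail_cons, edl2] at ih'
      rw [em1, List.tail_cons, edl, twigDet_cons a b, twigDet_cons a b]
      linear_combination ih'

/-- with `d` and `d'` the determinants of the indicated `4 × 4` and
`3 × 3` matrices, `d = d'` if and only if `ℓ = (n+1)·d(A) − d(Ā)`. -/
theorem stmt13 (A : List ℤ) (hA : Admissible A) (n ℓ : ℤ) (hn : 2 ≤ n) (hℓ : 0 ≤ ℓ) :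
    (!![2, -1, -1, -1;
        -(n * twigDet A.dropLast - twigDetMid A), n * twigDet A - twigDet A.tail, 0, 0;
        -(twigDet A - twigDet A.dropLast), 0, twigDet A, 0;
        -ℓ, 0, 0, ℓ + 1] : Matrix (Fin 4) (Fin 4) ℤ).det =
      (!![0, -1, -1;
          (n * twigDet A - twigDet A.tail) - (n * twigDet A.dropLast - twigDetMid A) - 1,
            n * twigDet A - twigDet A.tail, 0;
          twigDet A.dropLast - 1, 0, twigDet A] : Matrix (Fin 3) (Fin 3) ℤ).det ↔
      ℓ = (n + 1) * twigDet A - twigDet A.tail := by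
  have k := twig_key A hA.1
  set D := twigDet A with hD
  set Dl := twigDet A.dropLast with hDl
  set Dt := twigDet A.tail with hDt
  set Dm := twigDetMid A with hDm
  have h4 : (!![2, -1, -1, -1;
        -(n * Dl - Dm), n * D - Dt, 0, 0;
        -(D - Dl), 0, D, 0;
        -ℓ, 0, 0, ℓ + 1] : Matrix (Fin 4) (Fin 4) ℤ).det =
      2 * (n * D - Dt) * D * (ℓ + 1) - (n * Dl - Dm) * D * (ℓ + 1)
        - (D - Dl) * (n * D - Dt) * (ℓ + 1) - ℓ * (n * D - Dt) * D := by
    simp [Matrix.det_succ_row_zero, Fin.sum_univ_succ, Fin.succAbove,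
      Matrix.cons_val_succ, show ((2 : Fin 3).castSucc : Fin 4) = 2 from rfl]
    ring
  have h3 : (!![0, -1, -1;
          (n * D - Dt) - (n * Dl - Dm) - 1, n * D - Dt, 0;
          Dl - 1, 0, D] : Matrix (Fin 3) (Fin 3) ℤ).det =
      ((n * D - Dt) - (n * Dl - Dm) - 1) * D + (n * D - Dt) * (Dl - 1) := by
    simp [Matrix.det_fin_three]
    ring
  rw [h4, h3]
  constructor
  · intro h
    linear_combination (-1 : ℤ) * h + ℓ * k
  · intro h
    linear_combination (-1 : ℤ) * h + ℓ * k
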